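/- If a metric space M is finitely injective (i.e., for every finite metric space L, every subset K ⊆ L, and every isometric embedding f : K → M, there is an isometric embedding of L into M extending f), then every countable metric space admits an isometric embedding into M. -/

import Mathlib

/-- A metric space `M` is finitely injective if every distance-preserving map
from a subspace of a finite metric space into `M` extends to a
distance-preserving map of the whole finite space. -/
def FinitelyInjective (M : Type*) [MetricSpace M] : Prop :=
  ∀ (L : Type) (_ : MetricSpace L) (_ : Finite L) (K : Set L) (f : K → M),
    Isometry f → ∃ g : L → M, Isometry g ∧ ∀ x : K, g x = f x

section Aux

variable {M : Type*} [MetricSpace M] {X : Type} [MetricSpace X]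

/-- The image of `{0,...,n}` under `e`. -/
def auxS (e : ℕ → X) (n : ℕ) : Set X := e '' Set.Iic n

lemma auxS_mono (e : ℕ → X) {m n : ℕ} (h : m ≤ n) : auxS e m ⊆ auxS e n :=
  Set.image_mono (Set.Iic_subset_Iic.2 h)

lemma auxS_finite (e : ℕ → X) (n : ℕ) : (auxS e n).Finite :=
  (Set.finite_Iic n).image e

lemma aux_base (hM : FinitelyInjective M) (e : ℕ → X) :
    ∃ g : ↥(auxS e 0) → M, Isometry g := by
  have : Finite ↥(auxS e 0) := (auxS_finite e 0).to_subtype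
  obtain ⟨g, hg, -⟩ := hM (↥(auxS e 0)) inferInstance inferInstance ∅
    (fun y => absurd y.2 (Set.notMem_empty _)) (fun a b => absurd a.2 (Set.notMem_empty _))
  exact ⟨g, hg⟩

lemma aux_step (hM : FinitelyInjective M) (e : ℕ → X) (n : ℕ)
    (g : ↥(auxS e n) → M) (hg : Isometry g) :
    ∃ g' : ↥(auxS e (n+1)) → M, Isometry g' ∧
      ∀ x : ↥(auxS e n), g' ⟨x.1, auxS_mono e (Nat.le_succ n) x.2⟩ = g x := by
  have : Finite ↥(auxS e (n+1)) := (auxS_finite e (n+1)).to_subtype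
  set L := ↥(auxS e (n+1))
  set K : Set L := {y : L | (y : X) ∈ auxS e n} with hK
  have hf : Isometry (fun y : K => g ⟨(y : L).1, y.2⟩) := by
    intro a b
    rw [hg ⟨(a : L).1, a.2⟩ ⟨(b : L).1, b.2⟩]
    rw [Subtype.edist_eq a b, Subtype.edist_eq (a : L) (b : L)]
    exact Subtype.edist_eq _ _
  obtain ⟨g', hg', hext⟩ := hM L inferInstance inferInstance K _ hf
  refine ⟨g', hg', fun x => ?_⟩
  exact hext ⟨⟨x.1, auxS_mono e (Nat.le_succ n) x.2⟩, x.2⟩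

/-- The chain of partial isometries. -/
noncomputable def auxChain (hM : FinitelyInjective M) (e : ℕ → X) :
    ∀ n : ℕ, {g : ↥(auxS e n) → M // Isometry g}
  | 0 => ⟨(aux_base hM e).choose, (aux_base hM e).choose_spec⟩
  | n+1 =>
    ⟨(aux_step hM e n (auxChain hM e n).1 (auxChain hM e n).2).choose,
     (aux_step hM e n (auxChain hM e n).1 (auxChain hM e n).2).choose_spec.1⟩

lemma auxChain_succ (hM : FinitelyInjective M) (e : ℕ → X) (n : ℕ)
    (x : ↥(auxS e n)) :
    (auxChain hM e (n+1)).1 ⟨x.1, auxS_mono e (Nat.le_succ n) x.2⟩ =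
      (auxChain hM e n).1 x := by
  exact (aux_step hM e n (auxChain hM e n).1 (auxChain hM e n).2).choose_spec.2 x

lemma auxChain_agree (hM : FinitelyInjective M) (e : ℕ → X) {m n : ℕ} (h : m ≤ n)
    (x : X) (hx : x ∈ auxS e m) :
    (auxChain hM e n).1 ⟨x, auxS_mono e h hx⟩ = (auxChain hM e m).1 ⟨x, hx⟩ := by
  induction n, h using Nat.le_induction with
  | base => rfl
  | succ n hmn ih =>
    have := auxChain_succ hM e n ⟨x, auxS_mono e hmn hx⟩
    simpa [ih] using this

end Aux

theorem stmt0 (M : Type*) [MetricSpace M] (hM : FinitelyInjective M)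
    (X : Type) [MetricSpace X] [Countable X] :
    ∃ f : X → M, Isometry f := by
  cases isEmpty_or_nonempty X with
  | inl h => exact ⟨fun x => isEmptyElim x, fun a => isEmptyElim a⟩
  | inr h =>
    obtain ⟨e, he⟩ := exists_surjective_nat X
    have mem : ∀ x : X, x ∈ auxS e (he x).choose := fun x =>
      ⟨(he x).choose, Set.mem_Iic.2 le_rfl, (he x).choose_spec⟩
    refine ⟨fun x => (auxChain hM e (he x).choose).1 ⟨x, mem x⟩, ?_⟩
    apply Isometry.of_dist_eq
    intro x y
    set m := (he x).choose
    set n := (he y).choose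
    have hx : x ∈ auxS e (max m n) := auxS_mono e (le_max_left m n) (mem x)
    have hy : y ∈ auxS e (max m n) := auxS_mono e (le_max_right m n) (mem y)
    have h1 := auxChain_agree hM e (le_max_left m n) x (mem x)
    have h2 := auxChain_agree hM e (le_max_right m n) y (mem y)
    rw [← h1, ← h2]
    have := (auxChain hM e (max m n)).2.dist_eq ⟨x, hx⟩ ⟨y, hy⟩
    simpa [Subtype.dist_eq] using this
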